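/- Let e : (0,∞) → ℝ be a Synge-type EOS, d ≥ 1, and let Q ∈ ℝ^{d×d} be an orthogonal matrix. Then for every primitive state (ρ, v, θ) (ρ > 0, θ > 0, |v| < 1) and every i ∈ {1,…,d}, with ξ = Q⁻¹e_i ∈ ℝ^d and Q̃ = diag(1, Q, 1) ∈ ℝ^{(d+2)×(d+2)}, one has Σ_{k=1}^d ξ_k·F_k(ρ,v,θ) = Q̃⁻¹·F_i(ρ, Qv, θ). Moreover U(ρ, Qv, θ) = Q̃·U(ρ,v,θ). -/
import Mathlib


open scoped BigOperators

noncomputable section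

/-- Euclidean dot product on `Fin d → ℝ`. -/
def dotp {d : ℕ} (v w : Fin d → ℝ) : ℝ := ∑ i, v i * w i

/-- Squared Euclidean norm on `Fin d → ℝ`. -/
def nsq {d : ℕ} (v : Fin d → ℝ) : ℝ := ∑ i, (v i) ^ 2

/-- Euclidean norm on `Fin d → ℝ`. -/
def nrm {d : ℕ} (v : Fin d → ℝ) : ℝ := Real.sqrt (nsq v)

/-- `Z(θ) = ∫₁^θ e'(ξ)/ξ dξ`. -/
def Zfun (e : ℝ → ℝ) (θ : ℝ) : ℝ := ∫ ξ in (1:ℝ)..θ, deriv e ξ / ξ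

/-- Specific enthalpy `h(θ) = 1 + θ + e(θ)`. -/
def hfun (e : ℝ → ℝ) (θ : ℝ) : ℝ := 1 + θ + e θ

/-- Lorentz factor `γ = (1 − |v|²)^{−1/2}`. -/
def gam {d : ℕ} (v : Fin d → ℝ) : ℝ := 1 / Real.sqrt (1 - nsq v)

/-- Conservative vector `U(ρ,v,θ) = (ργ, ρh(θ)γ²v, ρh(θ)γ² − p)` with `p = ρθ`,
viewed as an element of `ℝ × ℝ^d × ℝ ≃ ℝ^{d+2}`. -/
def Uvec (e : ℝ → ℝ) {d : ℕ} (ρ : ℝ) (v : Fin d → ℝ) (θ : ℝ) : ℝ × (Fin d → ℝ) × ℝ :=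
  (ρ * gam v,
   fun j => ρ * hfun e θ * (gam v) ^ 2 * v j,
   ρ * hfun e θ * (gam v) ^ 2 - ρ * θ)

/-- Flux `F_i(ρ,v,θ) = (ργv_i, ρh(θ)γ²v_i v + p e_i, ρh(θ)γ²v_i)` with `p = ρθ`. -/
def Fvec (e : ℝ → ℝ) {d : ℕ} (i : Fin d) (ρ : ℝ) (v : Fin d → ℝ) (θ : ℝ) :
    ℝ × (Fin d → ℝ) × ℝ :=
  (ρ * gam v * v i,
   fun j => ρ * hfun e θ * (gam v) ^ 2 * v i * v j + ρ * θ * (if j = i then 1 else 0),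
   ρ * hfun e θ * (gam v) ^ 2 * v i)

/-- Euclidean inner product on `ℝ^{d+2} = ℝ × ℝ^d × ℝ`. -/
def dot3 {d : ℕ} (u w : ℝ × (Fin d → ℝ) × ℝ) : ℝ :=
  u.1 * w.1 + dotp u.2.1 w.2.1 + u.2.2 * w.2.2

/-- `ñ_*(v_*) = (−√(1−|v_*|²), −v_*, 1)`. -/
def ntil {d : ℕ} (vs : Fin d → ℝ) : ℝ × (Fin d → ℝ) × ℝ :=
  (-Real.sqrt (1 - nsq vs), fun j => -vs j, 1)

/-- `n_*(v_*,θ_*) = (−h(θ_*)√(1−|v_*|²), −v_*, 1)`. -/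
def nstar (e : ℝ → ℝ) {d : ℕ} (vs : Fin d → ℝ) (θs : ℝ) : ℝ × (Fin d → ℝ) × ℝ :=
  (-(hfun e θs) * Real.sqrt (1 - nsq vs), fun j => -vs j, 1)

/-- `p_*(θ_*) = θ_* exp(Z(θ_*) − σ)`. -/
def pstar (e : ℝ → ℝ) (σ θs : ℝ) : ℝ := θs * Real.exp (Zfun e θs - σ)

/-- The admissible set `Ω_σ ⊆ ℝ^{d+2}`. -/
def OmegaSet (e : ℝ → ℝ) (d : ℕ) (σ : ℝ) : Set (ℝ × (Fin d → ℝ) × ℝ) :=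
  { u | ∃ ρ θ : ℝ, ∃ v : Fin d → ℝ,
      0 < ρ ∧ 0 < θ ∧ nrm v < 1 ∧ σ ≤ -Real.log ρ + Zfun e θ ∧ u = Uvec e ρ v θ }

/-- rotational invariance. Let `e` be a Synge-type EOS, `d ≥ 1`,
and `Q ∈ ℝ^{d×d}` orthogonal. For every primitive state `(ρ,v,θ)` and every
`i ∈ {1,…,d}`, with `ξ = Q⁻¹e_i` and `Q̃ = diag(1,Q,1)`, one has
`Σ_k ξ_k F_k(ρ,v,θ) = Q̃⁻¹ F_i(ρ,Qv,θ)`; moreover `U(ρ,Qv,θ) = Q̃ U(ρ,v,θ)`. -/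
theorem minimum_entropy_stmt14 (e : ℝ → ℝ)
    (hdiff : ∀ ξ : ℝ, 0 < ξ → DifferentiableAt ℝ e ξ)
    (hpos : ∀ ξ : ℝ, 0 < ξ → 0 < e ξ)
    (hineq : ∀ ξ : ℝ, 0 < ξ → ξ / (e ξ + 1) < deriv e ξ)
    (d : ℕ) (hd : 1 ≤ d)
    (Q : Matrix (Fin d) (Fin d) ℝ) (hQ : Q.transpose * Q = 1)
    (ρ : ℝ) (v : Fin d → ℝ) (θ : ℝ)
    (hρ : 0 < ρ) (hθ : 0 < θ) (hv : nrm v < 1)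
    (i : Fin d) :
    (∑ k, (Q⁻¹.mulVec (Pi.single i 1)) k • Fvec e k ρ v θ) =
        ((Fvec e i ρ (Q.mulVec v) θ).1,
         Q⁻¹.mulVec (Fvec e i ρ (Q.mulVec v) θ).2.1,
         (Fvec e i ρ (Q.mulVec v) θ).2.2) ∧
      Uvec e ρ (Q.mulVec v) θ =
        ((Uvec e ρ v θ).1, Q.mulVec (Uvec e ρ v θ).2.1, (Uvec e ρ v θ).2.2) := by
  have hQinv : Q⁻¹ = Q.transpose := Matrix.inv_eq_left_inv hQ
  have hQv : Q.transpose.mulVec (Q.mulVec v) = v := by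
    rw [Matrix.mulVec_mulVec, hQ, Matrix.one_mulVec]
  have hnsq : nsq (Q.mulVec v) = nsq v := by
    have h1 : ∀ w : Fin d → ℝ, nsq w = dotProduct w w := by
      intro w; simp [nsq, dotProduct, sq]
    rw [h1, h1, Matrix.dotProduct_mulVec, ← Matrix.mulVec_transpose, hQv]
  have hgam : gam (Q.mulVec v) = gam v := by rw [gam, hnsq]; rfl
  have hcoef : ∀ k, (Q⁻¹.mulVec (Pi.single i 1)) k = Q i k := by
    intro k; simp [hQinv, Matrix.mulVec, dotProduct, Pi.single_apply]
  have hmul : ∀ (w : Fin d → ℝ) (j : Fin d), Q.mulVec w j = ∑ k, Q j k * w k := fun w j => rfl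
  have hmulT : ∀ (w : Fin d → ℝ) (j : Fin d), Q.transpose.mulVec w j = ∑ k, Q k j * w k := by
    intro w j; simp [Matrix.mulVec, dotProduct, Matrix.transpose_apply]
  set c := ρ * hfun e θ * (gam v) ^ 2 with hc
  constructor
  · refine Prod.ext_iff.mpr ⟨?_, Prod.ext_iff.mpr ⟨?_, ?_⟩⟩
    · simp only [Prod.fst_sum, Prod.smul_fst, smul_eq_mul, Fvec, hcoef, hgam, hmul,
        Finset.mul_sum]
      exact Finset.sum_congr rfl fun k _ => by ring
    · funext j
      simp only [Prod.snd_sum, Prod.fst_sum, Prod.smul_snd, Prod.smul_fst, Finset.sum_apply,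
        Pi.smul_apply, smul_eq_mul, hcoef]
      simp only [Fvec, hgam, hQinv, hmulT]
      have hL : ∑ k, Q i k * (c * v k * v j + ρ * θ * (if j = k then 1 else 0))
          = c * (Q.mulVec v i) * v j + ρ * θ * Q i j := by
        rw [hmul]
        rw [Finset.sum_congr rfl (fun k _ => mul_add (Q i k) _ _), Finset.sum_add_distrib]
        congr 1
        · rw [Finset.mul_sum, Finset.sum_mul]
          exact Finset.sum_congr rfl fun k _ => by ring
        · simp [mul_ite, Finset.sum_ite_eq, mul_comm]
      have hR : ∑ k, Q k j * (c * (Q.mulVec v i) * (Q.mulVec v k) + ρ * θ * (if k = i then 1 else 0))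
          = c * (Q.mulVec v i) * v j + ρ * θ * Q i j := by
        rw [Finset.sum_congr rfl (fun k _ => mul_add (Q k j) _ _), Finset.sum_add_distrib]
        congr 1
        · have : ∑ k, Q k j * (c * Q.mulVec v i * Q.mulVec v k)
              = c * Q.mulVec v i * (Q.transpose.mulVec (Q.mulVec v) j) := by
            rw [hmulT, Finset.mul_sum]
            exact Finset.sum_congr rfl fun k _ => by ring
          rw [this, hQv]
        · simp [mul_ite, mul_comm]
      rw [← hc, hL, hR]
    · simp only [Prod.snd_sum, Prod.smul_snd, smul_eq_mul, Fvec, hcoef, hgam, hmul,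
        Finset.mul_sum]
      exact Finset.sum_congr rfl fun k _ => by ring
  · refine Prod.ext_iff.mpr ⟨?_, Prod.ext_iff.mpr ⟨?_, ?_⟩⟩
    · simp [Uvec, hgam]
    · funext j
      simp only [Uvec, hgam, hmul, Finset.mul_sum]
      exact Finset.sum_congr rfl fun k _ => by ring
    · simp [Uvec, hgam]
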